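/- arXiv:2602.22271 — 5 statements merged into one kernel-verified Lean document; each statement's English description precedes it below -/
import Mathlib

section
/- For every t with 2 ≤ t ≤ L and every x ∈ ℝ^L, the map u ↦ u − Σ_{s<t} [exp(a·u·x_s)/Σ_{r<t} exp(a·u·x_r)]·x_s (that is, e_t viewed as a function of its t-th coordinate with x_1, …, x_{t−1} held fixed) is differentiable at u = x_t, and its derivative there equals 1 − a·Var_t(x). -/
/- Scalar strict-causal attention context:
   α_{ts}(x) = exp(a x_t x_s) / Σ_{r<t} exp(a x_t x_r) for s < t,
   μ_t(x) = Σ_{s<t} α_{ts}(x) x_s  (μ = 0 at the first position, as the sum is empty),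
   Var_t(x) = Σ_{s<t} α_{ts}(x) (x_s - μ_t(x))²,
   e_t(x) = x_t - μ_t(x).
   Positions are 0-indexed via `Fin L`, so "2 ≤ t ≤ L" becomes `1 ≤ (t : ℕ)`. -/

noncomputable section

def attnMu (L : ℕ) (a : ℝ) (x : Fin L → ℝ) (t : Fin L) : ℝ :=
  ∑ s ∈ Finset.Iio t,
    (Real.exp (a * x t * x s) / ∑ r ∈ Finset.Iio t, Real.exp (a * x t * x r)) * x s

def attnVar (L : ℕ) (a : ℝ) (x : Fin L → ℝ) (t : Fin L) : ℝ :=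
  ∑ s ∈ Finset.Iio t,
    (Real.exp (a * x t * x s) / ∑ r ∈ Finset.Iio t, Real.exp (a * x t * x r)) *
      (x s - attnMu L a x t) ^ 2

/-- Scalar diagonal derivative: for 2 ≤ t ≤ L (i.e. `1 ≤ (t : ℕ)` with 0-indexing),
the map `u ↦ u − Σ_{s<t} [exp(a u x_s)/Σ_{r<t} exp(a u x_r)]·x_s` is differentiable at
`u = x_t` with derivative `1 − a·Var_t(x)`. -/
theorem stmt0 (L : ℕ) (hL : 1 ≤ L) (a : ℝ) (x : Fin L → ℝ) (t : Fin L)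
    (ht : 1 ≤ (t : ℕ)) :
    HasDerivAt
      (fun u : ℝ => u - ∑ s ∈ Finset.Iio t,
        (Real.exp (a * u * x s) / ∑ r ∈ Finset.Iio t, Real.exp (a * u * x r)) * x s)
      (1 - a * attnVar L a x t) (x t) := by
  set I := Finset.Iio t with hI
  have hne : I.Nonempty := by
    refine ⟨⟨0, lt_of_lt_of_le Nat.zero_lt_one hL⟩, ?_⟩
    simp [hI, Finset.mem_Iio, Fin.lt_def]
    omega
  set u0 := x t with hu0
  set S : ℝ → ℝ := fun u => ∑ r ∈ I, Real.exp (a * u * x r) with hSdef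
  set N : ℝ → ℝ := fun u => ∑ s ∈ I, Real.exp (a * u * x s) * x s with hNdef
  have hSpos : 0 < S u0 := Finset.sum_pos (fun r _ => Real.exp_pos _) hne
  have hS0 : S u0 ≠ 0 := ne_of_gt hSpos
  -- set derived values
  set S0 := S u0
  set N0 := N u0
  set Q0 := ∑ s ∈ I, Real.exp (a * u0 * x s) * (x s) ^ 2 with hQ0
  -- derivative of S
  have hS : HasDerivAt S (a * N0) u0 := by
    have h : HasDerivAt S (∑ s ∈ I, Real.exp (a * u0 * x s) * (a * x s)) u0 := by
      apply HasDerivAt.fun_sum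
      intro s _
      have h1 : HasDerivAt (fun u : ℝ => a * u * x s) (a * x s) u0 := by
        simpa using ((hasDerivAt_id u0).const_mul a).mul_const (x s)
      exact h1.exp
    convert h using 1
    show a * N u0 = _
    simp only [hNdef, Finset.mul_sum]
    exact Finset.sum_congr rfl fun s _ => by ring
  -- derivative of N
  have hN : HasDerivAt N (a * Q0) u0 := by
    have h : HasDerivAt N (∑ s ∈ I, (Real.exp (a * u0 * x s) * (a * x s)) * x s) u0 := by
      apply HasDerivAt.fun_sum
      intro s _
      have h1 : HasDerivAt (fun u : ℝ => a * u * x s) (a * x s) u0 := by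
        simpa using ((hasDerivAt_id u0).const_mul a).mul_const (x s)
      exact (h1.exp).mul_const (x s)
    convert h using 1
    show a * Q0 = _
    simp only [hQ0, Finset.mul_sum]
    exact Finset.sum_congr rfl fun s _ => by ring
  -- the function equals u - N u / S u
  have hfun : (fun u : ℝ => u - ∑ s ∈ I,
      (Real.exp (a * u * x s) / ∑ r ∈ I, Real.exp (a * u * x r)) * x s)
      = fun u => u - N u / S u := by
    funext u
    simp only [hNdef, hSdef, div_mul_eq_mul_div, ← Finset.sum_div]
  -- variance identity
  have hmu : attnMu L a x t = N0 / S0 := by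
    rw [attnMu]
    simp only [div_mul_eq_mul_div, ← Finset.sum_div]
    rfl
  have hvar : attnVar L a x t = Q0 / S0 - (N0 / S0) ^ 2 := by
    set μ := attnMu L a x t with hμ
    have h1 : attnVar L a x t
        = (∑ s ∈ I, Real.exp (a * u0 * x s) * (x s - μ) ^ 2) / S0 := by
      rw [attnVar]
      simp only [div_mul_eq_mul_div, ← Finset.sum_div]
      rfl
    have h2 : (∑ s ∈ I, Real.exp (a * u0 * x s) * (x s - μ) ^ 2)
        = Q0 - 2 * μ * N0 + μ ^ 2 * S0 := by
      show _ = Q0 - 2 * μ * N u0 + μ ^ 2 * S u0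
      simp only [hQ0, hNdef, hSdef, Finset.mul_sum, ← Finset.sum_sub_distrib,
        ← Finset.sum_add_distrib]
      exact Finset.sum_congr rfl fun s _ => by ring
    rw [h1, h2, hmu]
    field_simp
    ring
  have hderiv : HasDerivAt (fun u => u - N u / S u)
      (1 - (a * Q0 * S0 - N0 * (a * N0)) / S0 ^ 2) u0 :=
    (hasDerivAt_id u0).sub (hN.div hS hS0)
  rw [hfun]
  convert hderiv using 1
  rw [hvar]
  field_simp
end
end

section
/- For every t with 2 ≤ t ≤ L and every x ∈ (ℝ^d)^L, the map u ↦ u − Σ_{s<t} [exp(uᵀ Aᵀ x_s)/Σ_{r<t} exp(uᵀ Aᵀ x_r)]·x_s (that is, e_t viewed as a function of its t-th block coordinate with x_1, …, x_{t−1} held fixed) is Fréchet differentiable at u = x_t, and its derivative there is the linear map ℝ^d → ℝ^d given by the matrix I_d − Σ_t(x)·A. -/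
noncomputable section

open Matrix

def vMu (d L : ℕ) (A : Matrix (Fin d) (Fin d) ℝ) (x : Fin L → Fin d → ℝ) (t : Fin L) :
    Fin d → ℝ :=
  ∑ s ∈ Finset.Iio t,
    (Real.exp (x t ⬝ᵥ (Aᵀ *ᵥ x s)) /
      ∑ r ∈ Finset.Iio t, Real.exp (x t ⬝ᵥ (Aᵀ *ᵥ x r))) • x s

def vSigma (d L : ℕ) (A : Matrix (Fin d) (Fin d) ℝ) (x : Fin L → Fin d → ℝ) (t : Fin L) :
    Matrix (Fin d) (Fin d) ℝ :=
  ∑ s ∈ Finset.Iio t,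
    (Real.exp (x t ⬝ᵥ (Aᵀ *ᵥ x s)) /
      ∑ r ∈ Finset.Iio t, Real.exp (x t ⬝ᵥ (Aᵀ *ᵥ x r))) •
      Matrix.vecMulVec (x s - vMu d L A x t) (x s - vMu d L A x t)

/-- dot product with a fixed vector, as a continuous linear map. -/
def dpCLM (d : ℕ) (a : Fin d → ℝ) : (Fin d → ℝ) →L[ℝ] ℝ :=
  LinearMap.toContinuousLinearMap
    { toFun := fun u => u ⬝ᵥ a
      map_add' := fun u v => add_dotProduct u v a
      map_smul' := fun r u => smul_dotProduct r u a }

@[simp] lemma dpCLM_apply (d : ℕ) (a v : Fin d → ℝ) : dpCLM d a v = v ⬝ᵥ a := rfl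

lemma hasFDerivAt_dp (d : ℕ) (a : Fin d → ℝ) (u : Fin d → ℝ) :
    HasFDerivAt (fun w : Fin d → ℝ => w ⬝ᵥ a) (dpCLM d a) u :=
  (dpCLM d a).hasFDerivAt

lemma sum_dotProduct' {d : ℕ} {ι : Type*} (F : Finset ι) (f : ι → Fin d → ℝ)
    (q : Fin d → ℝ) : (∑ s ∈ F, f s) ⬝ᵥ q = ∑ s ∈ F, f s ⬝ᵥ q := by
  simp only [dotProduct, Finset.sum_apply, Finset.sum_mul]
  exact Finset.sum_comm

lemma sum_mulVec' {d : ℕ} {ι : Type*} (F : Finset ι) (M : ι → Matrix (Fin d) (Fin d) ℝ)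
    (q : Fin d → ℝ) : (∑ s ∈ F, M s) *ᵥ q = ∑ s ∈ F, M s *ᵥ q := by
  funext i
  simp only [Matrix.mulVec, dotProduct, Matrix.sum_apply, Finset.sum_apply, Finset.sum_mul]
  exact Finset.sum_comm

lemma vecMulVec_mulVec' {d : ℕ} (b c q : Fin d → ℝ) :
    Matrix.vecMulVec b c *ᵥ q = (c ⬝ᵥ q) • b := by
  funext i
  simp only [Matrix.mulVec, dotProduct, Matrix.vecMulVec_apply, Pi.smul_apply, smul_eq_mul,
    Finset.sum_mul]
  exact Finset.sum_congr rfl fun j _ => by ring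

/-- Diagonal Jacobian block: for 2 ≤ t ≤ L (0-indexed: `1 ≤ (t : ℕ)`), the map
`u ↦ u − Σ_{s<t} [exp(uᵀAᵀx_s)/Σ_{r<t} exp(uᵀAᵀx_r)]·x_s` is Fréchet differentiable at
`u = x_t` with derivative the linear map given by the matrix `I_d − Σ_t(x)·A`. -/
theorem stmt1 (d L : ℕ) (hd : 1 ≤ d) (hL : 1 ≤ L) (A : Matrix (Fin d) (Fin d) ℝ)
    (x : Fin L → Fin d → ℝ) (t : Fin L) (ht : 1 ≤ (t : ℕ)) :
    HasFDerivAt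
      (fun u : Fin d → ℝ => u - ∑ s ∈ Finset.Iio t,
        (Real.exp (u ⬝ᵥ (Aᵀ *ᵥ x s)) /
          ∑ r ∈ Finset.Iio t, Real.exp (u ⬝ᵥ (Aᵀ *ᵥ x r))) • x s)
      (LinearMap.toContinuousLinearMap
        (Matrix.mulVecLin ((1 : Matrix (Fin d) (Fin d) ℝ) - vSigma d L A x t * A)))
      (x t) := by
  classical
  have h0L : 0 < L := hL
  have hne : (Finset.Iio t).Nonempty := ⟨⟨0, h0L⟩, by
    simp [Finset.mem_Iio, Fin.lt_def]; omega⟩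
  set a : Fin L → Fin d → ℝ := fun s => Aᵀ *ᵥ x s with ha
  set c : Fin L → ℝ := fun s => Real.exp (x t ⬝ᵥ a s) with hcdef
  set S : ℝ := ∑ r ∈ Finset.Iio t, c r with hSdef
  have hS : 0 < S := Finset.sum_pos (fun r _ => Real.exp_pos _) hne
  have hS0 : S ≠ 0 := ne_of_gt hS
  set D' : (Fin d → ℝ) →L[ℝ] ℝ := ∑ r ∈ Finset.Iio t, c r • dpCLM d (a r) with hD'def
  have h2 : ∀ s : Fin L, HasFDerivAt (fun u : Fin d → ℝ => Real.exp (u ⬝ᵥ a s))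
      (c s • dpCLM d (a s)) (x t) := fun s => (hasFDerivAt_dp d (a s) (x t)).exp
  have hD : HasFDerivAt (fun u : Fin d → ℝ => ∑ r ∈ Finset.Iio t, Real.exp (u ⬝ᵥ a r))
      D' (x t) := HasFDerivAt.fun_sum fun r _ => h2 r
  have hInv : HasFDerivAt
      (fun u : Fin d → ℝ => (∑ r ∈ Finset.Iio t, Real.exp (u ⬝ᵥ a r))⁻¹)
      ((-(S ^ 2)⁻¹) • D') (x t) :=
    (hasDerivAt_inv hS0).comp_hasFDerivAt (x t) hD
  have hw : ∀ s : Fin L, HasFDerivAt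
      (fun u : Fin d → ℝ =>
        Real.exp (u ⬝ᵥ a s) * (∑ r ∈ Finset.Iio t, Real.exp (u ⬝ᵥ a r))⁻¹)
      (c s • ((-(S ^ 2)⁻¹) • D') + S⁻¹ • (c s • dpCLM d (a s))) (x t) :=
    fun s => (h2 s).mul hInv
  have hf : HasFDerivAt
      (fun u : Fin d → ℝ => u - ∑ s ∈ Finset.Iio t,
        (Real.exp (u ⬝ᵥ a s) * (∑ r ∈ Finset.Iio t, Real.exp (u ⬝ᵥ a r))⁻¹) • x s)
      (ContinuousLinearMap.id ℝ (Fin d → ℝ) - ∑ s ∈ Finset.Iio t,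
        (c s • ((-(S ^ 2)⁻¹) • D') + S⁻¹ • (c s • dpCLM d (a s))).smulRight (x s)) (x t) :=
    (hasFDerivAt_id (x t)).sub (HasFDerivAt.fun_sum fun s _ => (hw s).smul_const (x s))
  have hgoalfun : (fun u : Fin d → ℝ => u - ∑ s ∈ Finset.Iio t,
      (Real.exp (u ⬝ᵥ (Aᵀ *ᵥ x s)) /
        ∑ r ∈ Finset.Iio t, Real.exp (u ⬝ᵥ (Aᵀ *ᵥ x r))) • x s)
      = (fun u : Fin d → ℝ => u - ∑ s ∈ Finset.Iio t,
        (Real.exp (u ⬝ᵥ a s) * (∑ r ∈ Finset.Iio t, Real.exp (u ⬝ᵥ a r))⁻¹) • x s) := by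
    simp [div_eq_mul_inv, ha]
  rw [hgoalfun]
  have hEq : (LinearMap.toContinuousLinearMap
        (Matrix.mulVecLin ((1 : Matrix (Fin d) (Fin d) ℝ) - vSigma d L A x t * A)))
      = ContinuousLinearMap.id ℝ (Fin d → ℝ) - ∑ s ∈ Finset.Iio t,
        (c s • ((-(S ^ 2)⁻¹) • D') + S⁻¹ • (c s • dpCLM d (a s))).smulRight (x s) := by
    refine ContinuousLinearMap.ext fun v => ?_
    funext i
    set q : Fin d → ℝ := A *ᵥ v with hq
    have hp : ∀ s : Fin L, v ⬝ᵥ a s = x s ⬝ᵥ q := fun s => by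
      rw [ha]
      simp only []
      rw [Matrix.dotProduct_mulVec, Matrix.vecMul_transpose, dotProduct_comm]
    set μ : Fin d → ℝ := vMu d L A x t with hμ
    have hμq : μ ⬝ᵥ q = ∑ s ∈ Finset.Iio t, (c s / S) * (x s ⬝ᵥ q) := by
      rw [hμ, vMu, sum_dotProduct']
      exact Finset.sum_congr rfl fun s _ => smul_dotProduct _ _ _
    set m : ℝ := μ ⬝ᵥ q with hm
    -- left-hand side
    have hL1 : (LinearMap.toContinuousLinearMap
        (Matrix.mulVecLin ((1 : Matrix (Fin d) (Fin d) ℝ) - vSigma d L A x t * A))) v i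
        = v i - ∑ s ∈ Finset.Iio t, (c s / S) * (((x s ⬝ᵥ q) - m) * (x s i - μ i)) := by
      have h1 : ((1 : Matrix (Fin d) (Fin d) ℝ) - vSigma d L A x t * A) *ᵥ v
          = v - vSigma d L A x t *ᵥ q := by
        rw [Matrix.sub_mulVec, Matrix.one_mulVec, ← Matrix.mulVec_mulVec]
      have h2 : vSigma d L A x t *ᵥ q
          = ∑ s ∈ Finset.Iio t, (c s / S) • ((((x s - μ) ⬝ᵥ q)) • (x s - μ)) := by
        rw [vSigma, sum_mulVec']
        refine Finset.sum_congr rfl fun s _ => ?_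
        rw [Matrix.smul_mulVec, vecMulVec_mulVec']
      simp only [LinearMap.coe_toContinuousLinearMap', Matrix.mulVecLin_apply, h1, h2,
        Pi.sub_apply, Finset.sum_apply, Pi.smul_apply, smul_eq_mul]
      congr 1
      refine Finset.sum_congr rfl fun s _ => ?_
      rw [sub_dotProduct]
    rw [hL1]
    -- right-hand side
    have hR1 : (ContinuousLinearMap.id ℝ (Fin d → ℝ) - ∑ s ∈ Finset.Iio t,
        (c s • ((-(S ^ 2)⁻¹) • D') + S⁻¹ • (c s • dpCLM d (a s))).smulRight (x s)) v i
        = v i - ∑ s ∈ Finset.Iio t,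
            (c s * (-(S ^ 2)⁻¹ * ∑ r ∈ Finset.Iio t, c r * (x r ⬝ᵥ q)) +
              S⁻¹ * (c s * (x s ⬝ᵥ q))) * x s i := by
      simp only [ContinuousLinearMap.sub_apply, ContinuousLinearMap.coe_id', id_eq,
        ContinuousLinearMap.coe_sum', Finset.sum_apply, Pi.sub_apply,
        ContinuousLinearMap.smulRight_apply, ContinuousLinearMap.add_apply,
        ContinuousLinearMap.coe_smul', Pi.smul_apply, dpCLM_apply, smul_eq_mul, hD'def, hp]
    rw [hR1]
    -- scalar identity
    have hsumc : ∑ r ∈ Finset.Iio t, c r * (x r ⬝ᵥ q) = S * m := by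
      rw [hμq, Finset.mul_sum]
      exact Finset.sum_congr rfl fun r _ => by field_simp
    have hterm : ∀ s ∈ Finset.Iio t,
        (c s * (-(S ^ 2)⁻¹ * ∑ r ∈ Finset.Iio t, c r * (x r ⬝ᵥ q)) +
          S⁻¹ * (c s * (x s ⬝ᵥ q))) * x s i
        = (c s / S) * (((x s ⬝ᵥ q) - m) * x s i) := by
      intro s _
      rw [hsumc]
      field_simp
      ring
    rw [Finset.sum_congr rfl hterm]
    congr 1
    have hw1 : ∑ s ∈ Finset.Iio t, c s / S = 1 := by
      rw [← Finset.sum_div, ← hSdef, div_self hS0]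
    have hzero : ∑ s ∈ Finset.Iio t, (c s / S) * ((x s ⬝ᵥ q) - m) = 0 := by
      have : ∑ s ∈ Finset.Iio t, (c s / S) * ((x s ⬝ᵥ q) - m)
          = (∑ s ∈ Finset.Iio t, (c s / S) * (x s ⬝ᵥ q))
            - (∑ s ∈ Finset.Iio t, c s / S) * m := by
        rw [Finset.sum_mul, ← Finset.sum_sub_distrib]
        exact Finset.sum_congr rfl fun s _ => by ring
      rw [this, hw1, one_mul, ← hμq, sub_self]
    have expand : ∀ s ∈ Finset.Iio t,
        (c s / S) * (((x s ⬝ᵥ q) - m) * (x s i - μ i))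
        = (c s / S) * (((x s ⬝ᵥ q) - m) * x s i)
          - ((c s / S) * ((x s ⬝ᵥ q) - m)) * μ i := by
      intro s _; ring
    rw [Finset.sum_congr rfl expand, Finset.sum_sub_distrib, ← Finset.sum_mul, hzero,
      zero_mul, sub_zero]
  rw [hEq]
  exact hf

end
end

section
/- The residual map E is differentiable on (ℝ^d)^L ≅ ℝ^{dL}; writing its Fréchet derivative at x as an L×L block matrix of d×d blocks J_{ts}(x) = ∂e_t/∂x_s, one has J_{ts}(x) = 0 whenever s > t, and det DE(x) = ∏_{t=1}^L det(J_{tt}(x)) = ∏_{t=2}^L det(I_d − Σ_t(x)·A), the t = 1 diagonal block being I_d. -/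
set_option maxHeartbeats 1000000

/- Vector strict-causal attention context (0-indexed positions via `Fin L`):
   μ_t(x), covariance Σ_t(x), residual e_t(x) = x_t - μ_t(x), residual map E = vResidMap.
   The Fréchet derivative of E at x is viewed as an L×L block matrix of d×d blocks
   J_{ts}(x) with entries `fderiv ℝ E x (Pi.single s (Pi.single j 1)) t i`. -/

noncomputable section

open Matrix

def vResidMap (d L : ℕ) (A : Matrix (Fin d) (Fin d) ℝ) (x : Fin L → Fin d → ℝ) :
    Fin L → Fin d → ℝ :=
  fun t => x t - vMu d L A x t

namespace StrictCausalAux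

variable {d L : ℕ} {A : Matrix (Fin d) (Fin d) ℝ}

/-! ### Differentiability -/

lemma diff_coord (t : Fin L) (i : Fin d) :
    Differentiable ℝ (fun x : Fin L → Fin d → ℝ => x t i) :=
  ((ContinuousLinearMap.proj (R := ℝ) (φ := fun _ : Fin d => ℝ) i).comp
    (ContinuousLinearMap.proj (R := ℝ) (φ := fun _ : Fin L => Fin d → ℝ) t)).differentiable

lemma diff_proj (t : Fin L) :
    Differentiable ℝ (fun x : Fin L → Fin d → ℝ => x t) :=
  (ContinuousLinearMap.proj (R := ℝ) (φ := fun _ : Fin L => Fin d → ℝ) t).differentiable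

lemma diff_dot (t s : Fin L) :
    Differentiable ℝ (fun x : Fin L → Fin d → ℝ => x t ⬝ᵥ (Aᵀ *ᵥ x s)) := by
  simp only [dotProduct, mulVec]
  refine Differentiable.fun_sum fun i _ => ?_
  refine (diff_coord t i).mul ?_
  exact Differentiable.fun_sum fun k _ => (differentiable_const _).mul (diff_coord s k)

lemma Zpos (x : Fin L → Fin d → ℝ) (t : Fin L) (ht : (Finset.Iio t).Nonempty) :
    0 < ∑ r ∈ Finset.Iio t, Real.exp (x t ⬝ᵥ (Aᵀ *ᵥ x r)) :=
  Finset.sum_pos (fun _ _ => Real.exp_pos _) ht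

lemma diff_mu (t : Fin L) :
    Differentiable ℝ (fun x : Fin L → Fin d → ℝ => vMu d L A x t) := by
  unfold vMu
  refine Differentiable.fun_sum fun s hs => ?_
  have hc : Differentiable ℝ (fun x : Fin L → Fin d → ℝ =>
      Real.exp (x t ⬝ᵥ (Aᵀ *ᵥ x s)) /
        ∑ r ∈ Finset.Iio t, Real.exp (x t ⬝ᵥ (Aᵀ *ᵥ x r))) := by
    simp only [div_eq_mul_inv]
    refine ((diff_dot t s).exp).mul ?_
    refine Differentiable.inv ?_ fun x => (Zpos x t ⟨s, hs⟩).ne'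
    exact Differentiable.fun_sum fun r _ => (diff_dot t r).exp
  exact hc.smul (diff_proj s)

lemma diff_resid : Differentiable ℝ (vResidMap d L A) := by
  refine differentiable_pi'' fun t => ?_
  exact (diff_proj t).sub (diff_mu t)

lemma diff_resid_t (t : Fin L) :
    Differentiable ℝ (fun x : Fin L → Fin d → ℝ => vResidMap d L A x t) :=
  (diff_proj t).sub (diff_mu t)

lemma diff_resid_entry (t : Fin L) (i : Fin d) :
    Differentiable ℝ (fun x : Fin L → Fin d → ℝ => vResidMap d L A x t i) :=
  differentiable_pi.mp (diff_resid_t t) i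

/-! ### Directional derivatives along a single block -/

lemma fderiv_single_dir {F : Type*} [NormedAddCommGroup F] [NormedSpace ℝ F]
    (f : (Fin L → Fin d → ℝ) → F) (x : Fin L → Fin d → ℝ)
    (hf : DifferentiableAt ℝ f x) (s : Fin L) (v : Fin d → ℝ) :
    fderiv ℝ f x (Pi.single s v)
      = fderiv ℝ (fun y => f (Function.update x s y)) (x s) v := by
  have hupd := hasFDerivAt_update (𝕜 := ℝ) (i := s) x (x s)
  have hfx : HasFDerivAt f (fderiv ℝ f x) (Function.update x s (x s)) := by
    rw [Function.update_eq_self]; exact hf.hasFDerivAt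
  have hcomp := hfx.comp (x s) hupd
  have heq : (fun y => f (Function.update x s y)) = f ∘ Function.update x s := rfl
  rw [heq, hcomp.fderiv]
  show (fderiv ℝ f x) (Pi.single s v) = (fderiv ℝ f x) _
  congr 1
  funext r
  by_cases h : r = s
  · subst h; simp
  · simp [Pi.single_apply, h]

lemma fderiv_entry (x u : Fin L → Fin d → ℝ) (t : Fin L) (i : Fin d) :
    fderiv ℝ (vResidMap d L A) x u t i
      = fderiv ℝ (fun x => vResidMap d L A x t i) x u := by
  have H : HasFDerivAt (vResidMap d L A) (fderiv ℝ (vResidMap d L A) x) x :=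
    (diff_resid x).hasFDerivAt
  have h1 := ((ContinuousLinearMap.proj (R := ℝ) (φ := fun _ : Fin L => Fin d → ℝ)
    t).hasFDerivAt).comp x H
  have h2 := ((ContinuousLinearMap.proj (R := ℝ) (φ := fun _ : Fin d => ℝ)
    i).hasFDerivAt).comp x h1
  have heq : (fun x => vResidMap d L A x t i)
      = (⇑(ContinuousLinearMap.proj (R := ℝ) (φ := fun _ : Fin d => ℝ) i)
        ∘ ⇑(ContinuousLinearMap.proj (R := ℝ) (φ := fun _ : Fin L => Fin d → ℝ) t)
        ∘ vResidMap d L A) := rfl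
  rw [heq, h2.fderiv]
  rfl

lemma resid_update_const (x : Fin L → Fin d → ℝ) (t s : Fin L) (hts : t < s)
    (y : Fin d → ℝ) :
    vResidMap d L A (Function.update x s y) t = vResidMap d L A x t := by
  have h : ∀ r : Fin L, r ≤ t → Function.update x s y r = x r := fun r hr =>
    Function.update_of_ne (ne_of_lt (lt_of_le_of_lt hr hts)) _ _
  unfold vResidMap vMu
  rw [h t le_rfl]
  congr 1
  refine Finset.sum_congr rfl fun r hr => ?_
  rw [h r (le_of_lt (Finset.mem_Iio.mp hr))]
  congr 2
  refine Finset.sum_congr rfl fun q hq => ?_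
  rw [h q (le_of_lt (Finset.mem_Iio.mp hq))]

lemma offdiag_zero (x : Fin L → Fin d → ℝ) (t s : Fin L) (hts : t < s) (i j : Fin d) :
    fderiv ℝ (vResidMap d L A) x (Pi.single s (Pi.single j 1)) t i = 0 := by
  rw [fderiv_entry,
    fderiv_single_dir (fun x => vResidMap d L A x t i) x
      ((diff_resid_entry t i).differentiableAt) s]
  have : (fun y => vResidMap d L A (Function.update x s y) t i)
      = fun _ => vResidMap d L A x t i := by
    funext y; rw [resid_update_const x t s hts]
  rw [this, fderiv_fun_const]
  simp

/-! ### The diagonal blocks -/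

def dotCLM {d : ℕ} (c : Fin d → ℝ) : (Fin d → ℝ) →L[ℝ] ℝ :=
  ∑ i, c i • ContinuousLinearMap.proj i

@[simp] lemma dotCLM_apply (c v : Fin d → ℝ) : dotCLM c v = c ⬝ᵥ v := by
  simp [dotCLM, dotProduct, ContinuousLinearMap.sum_apply]

lemma hasFDerivAt_dot (c : Fin d → ℝ) (y : Fin d → ℝ) :
    HasFDerivAt (fun y : Fin d → ℝ => y ⬝ᵥ c) (dotCLM c) y := by
  have : (fun y : Fin d → ℝ => y ⬝ᵥ c) = fun y => dotCLM c y := by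
    funext y; simp [dotProduct_comm]
  rw [this]
  exact (dotCLM c).hasFDerivAt

lemma wsum_mulVec (S : Finset (Fin L)) (w : Fin L → ℝ) (b : Fin L → Fin d → ℝ)
    (v : Fin d → ℝ) (i : Fin d) :
    (((∑ s ∈ S, w s • Matrix.vecMulVec (b s) (b s)) * A) *ᵥ v) i
      = ∑ s ∈ S, w s * (b s i * (b s ⬝ᵥ (A *ᵥ v))) := by
  simp only [mulVec, mul_apply, dotProduct, Finset.sum_apply, Pi.smul_apply,
    vecMulVec_apply, smul_eq_mul, Matrix.sum_apply, Matrix.smul_apply,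
    Finset.sum_mul, Finset.mul_sum]
  refine Eq.trans (Finset.sum_congr rfl fun j _ => Finset.sum_comm) ?_
  refine Eq.trans Finset.sum_comm ?_
  refine Finset.sum_congr rfl fun s _ => ?_
  refine Eq.trans Finset.sum_comm ?_
  exact Finset.sum_congr rfl fun k _ => Finset.sum_congr rfl fun j _ => by ring

lemma sigmaA_mulVec (x : Fin L → Fin d → ℝ) (t : Fin L) (v : Fin d → ℝ) (i : Fin d) :
    ((vSigma d L A x t * A) *ᵥ v) i
      = ∑ s ∈ Finset.Iio t,
          (Real.exp (x t ⬝ᵥ (Aᵀ *ᵥ x s)) /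
            ∑ r ∈ Finset.Iio t, Real.exp (x t ⬝ᵥ (Aᵀ *ᵥ x r))) *
          ((x s i - vMu d L A x t i) *
            ((x s ⬝ᵥ (A *ᵥ v)) - (vMu d L A x t ⬝ᵥ (A *ᵥ v)))) := by
  rw [show vSigma d L A x t = ∑ s ∈ Finset.Iio t,
      (Real.exp (x t ⬝ᵥ (Aᵀ *ᵥ x s)) /
        ∑ r ∈ Finset.Iio t, Real.exp (x t ⬝ᵥ (Aᵀ *ᵥ x r))) •
      Matrix.vecMulVec ((fun s => x s - vMu d L A x t) s)
        ((fun s => x s - vMu d L A x t) s) from rfl,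
    wsum_mulVec]
  refine Finset.sum_congr rfl fun s _ => ?_
  simp [sub_dotProduct]

lemma mu_dot (x : Fin L → Fin d → ℝ) (t : Fin L) (c : Fin d → ℝ) :
    vMu d L A x t ⬝ᵥ c = ∑ s ∈ Finset.Iio t,
      (Real.exp (x t ⬝ᵥ (Aᵀ *ᵥ x s)) /
        ∑ r ∈ Finset.Iio t, Real.exp (x t ⬝ᵥ (Aᵀ *ᵥ x r))) * (x s ⬝ᵥ c) := by
  simp only [vMu, dotProduct, Finset.sum_apply, Pi.smul_apply, smul_eq_mul,
    Finset.sum_mul, Finset.mul_sum]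
  exact Eq.trans Finset.sum_comm
    (Finset.sum_congr rfl fun s _ => Finset.sum_congr rfl fun k _ => by ring)

lemma mu_apply (x : Fin L → Fin d → ℝ) (t : Fin L) (i : Fin d) :
    vMu d L A x t i = ∑ s ∈ Finset.Iio t,
      (Real.exp (x t ⬝ᵥ (Aᵀ *ᵥ x s)) /
        ∑ r ∈ Finset.Iio t, Real.exp (x t ⬝ᵥ (Aᵀ *ᵥ x r))) * x s i := by
  simp [vMu, Finset.sum_apply]

lemma final_alg (S : Finset (Fin L)) (E P X' : Fin L → ℝ) (mi Z : ℝ)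
    (hZ : Z ≠ 0) (hZdef : Z = ∑ r ∈ S, E r) :
    ∑ s ∈ S, (E s / Z) * ((X' s - mi) * (P s - ∑ r ∈ S, (E r / Z) * P r))
      = ∑ s ∈ S, (E s * ((∑ r ∈ S, E r * P r) * -((Z ^ 2)⁻¹)) + Z⁻¹ * (E s * P s)) * X' s := by
  have hw1 : ∑ s ∈ S, E s / Z = 1 := by
    rw [← Finset.sum_div, ← hZdef]; exact div_self hZ
  have hT : ∑ r ∈ S, E r * P r = (∑ r ∈ S, (E r / Z) * P r) * Z := by
    rw [Finset.sum_mul]; refine Finset.sum_congr rfl fun r _ => ?_; field_simp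
  rw [hT]
  set M := ∑ r ∈ S, (E r / Z) * P r with hM
  have h2 : ∀ s ∈ S, (E s * ((M * Z) * -((Z ^ 2)⁻¹)) + Z⁻¹ * (E s * P s)) * X' s
      = (E s / Z) * (P s - M) * X' s := by
    intro s _; field_simp; ring
  rw [Finset.sum_congr rfl h2, ← sub_eq_zero, ← Finset.sum_sub_distrib]
  have h3 : ∀ s ∈ S, (E s / Z) * ((X' s - mi) * (P s - M)) - (E s / Z) * (P s - M) * X' s
      = -mi * ((E s / Z) * P s - (E s / Z) * M) := by intro s _; ring
  rw [Finset.sum_congr rfl h3, ← Finset.mul_sum, Finset.sum_sub_distrib, ← Finset.sum_mul,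
    hw1, one_mul, ← hM, sub_self, mul_zero]

lemma hasFDerivAt_diag (x : Fin L → Fin d → ℝ) (t : Fin L) :
    HasFDerivAt (fun y : Fin d → ℝ => vResidMap d L A (Function.update x t y) t)
      (LinearMap.toContinuousLinearMap
        (Matrix.mulVecLin ((1 : Matrix (Fin d) (Fin d) ℝ) - vSigma d L A x t * A)))
      (x t) := by
  have hfun : (fun y : Fin d → ℝ => vResidMap d L A (Function.update x t y) t)
      = fun y => y - ∑ s ∈ Finset.Iio t,
          (Real.exp (y ⬝ᵥ (Aᵀ *ᵥ x s)) *
            (∑ r ∈ Finset.Iio t, Real.exp (y ⬝ᵥ (Aᵀ *ᵥ x r)))⁻¹) • x s := by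
    funext y
    have hupd : ∀ r ∈ Finset.Iio t, Function.update x t y r = x r := fun r hr =>
      Function.update_of_ne (ne_of_lt (Finset.mem_Iio.mp hr)) _ _
    unfold vResidMap vMu
    rw [Function.update_self]
    congr 1
    refine Finset.sum_congr rfl fun s hs => ?_
    rw [hupd s hs, div_eq_mul_inv,
      show (∑ r ∈ Finset.Iio t, Real.exp (y ⬝ᵥ (Aᵀ *ᵥ Function.update x t y r)))
          = ∑ r ∈ Finset.Iio t, Real.exp (y ⬝ᵥ (Aᵀ *ᵥ x r)) from
        Finset.sum_congr rfl fun r hr => by rw [hupd r hr]]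
  rw [hfun]
  rcases Finset.eq_empty_or_nonempty (Finset.Iio t) with hemp | hne
  · have hsig : vSigma d L A x t = 0 := by unfold vSigma; rw [hemp, Finset.sum_empty]
    rw [hsig]
    simp only [hemp, Finset.sum_empty, sub_zero, Matrix.zero_mul]
    have hid : LinearMap.toContinuousLinearMap
        (Matrix.mulVecLin (1 : Matrix (Fin d) (Fin d) ℝ))
        = ContinuousLinearMap.id ℝ (Fin d → ℝ) := by
      ext v
      simp
    rw [hid]
    exact hasFDerivAt_id _
  · have hZ := Zpos (A := A) x t hne
    have hexp : ∀ s : Fin L, HasFDerivAt (fun y : Fin d → ℝ => Real.exp (y ⬝ᵥ (Aᵀ *ᵥ x s)))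
        (Real.exp (x t ⬝ᵥ (Aᵀ *ᵥ x s)) • dotCLM (Aᵀ *ᵥ x s)) (x t) :=
      fun s => (hasFDerivAt_dot _ (x t)).exp
    have hZsum : HasFDerivAt
        (fun y : Fin d → ℝ => ∑ r ∈ Finset.Iio t, Real.exp (y ⬝ᵥ (Aᵀ *ᵥ x r)))
        (∑ r ∈ Finset.Iio t, Real.exp (x t ⬝ᵥ (Aᵀ *ᵥ x r)) • dotCLM (Aᵀ *ᵥ x r)) (x t) :=
      HasFDerivAt.fun_sum fun r _ => hexp r
    have hinv := (hasFDerivAt_inv hZ.ne').comp (x t) hZsum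
    have hsum := HasFDerivAt.fun_sum (u := Finset.Iio t)
      (fun s (_ : s ∈ Finset.Iio t) => ((hexp s).mul hinv).smul_const (x s))
    have hg := (hasFDerivAt_id (x t)).sub hsum
    convert hg using 1
    case e'_4 => rfl
    case e'_5 => rfl
    case e'_6 => rfl
    case e'_8 => rfl
    case e'_9 => rfl
    case e'_10 => rfl
    case e'_11 => rfl
    apply ContinuousLinearMap.ext
    intro v
    funext i
    simp only [Matrix.mulVecLin_apply, LinearMap.coe_toContinuousLinearMap',
      Matrix.sub_mulVec, Matrix.one_mulVec, Pi.sub_apply,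
      ContinuousLinearMap.sub_apply, ContinuousLinearMap.coe_id', id_eq,
      ContinuousLinearMap.sum_apply, ContinuousLinearMap.smulRight_apply,
      ContinuousLinearMap.add_apply, ContinuousLinearMap.smul_apply,
      ContinuousLinearMap.coe_comp', Function.comp_apply,
      ContinuousLinearMap.one_apply, dotCLM_apply, smul_eq_mul,
      Finset.sum_apply, Pi.smul_apply]
    congr 1
    have hPs : ∀ s : Fin L, x s ⬝ᵥ (A *ᵥ v) = (Aᵀ *ᵥ x s) ⬝ᵥ v := fun s => by
      rw [Matrix.mulVec_transpose, Matrix.dotProduct_mulVec]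
    rw [sigmaA_mulVec, mu_dot]
    simp only [hPs]
    exact final_alg (Finset.Iio t) _ _ _ _ _ hZ.ne' rfl

lemma diag_entry (x : Fin L → Fin d → ℝ) (t : Fin L) (i j : Fin d) :
    fderiv ℝ (vResidMap d L A) x (Pi.single t (Pi.single j 1)) t i
      = ((1 : Matrix (Fin d) (Fin d) ℝ) - vSigma d L A x t * A) i j := by
  rw [fderiv_entry,
    fderiv_single_dir (fun x => vResidMap d L A x t i) x
      ((diff_resid_entry t i).differentiableAt) t]
  have H := hasFDerivAt_diag (A := A) x t
  have Hi := ((ContinuousLinearMap.proj (R := ℝ) (φ := fun _ : Fin d => ℝ)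
    i).hasFDerivAt).comp (x t) H
  have heq : (fun y => vResidMap d L A (Function.update x t y) t i)
      = (⇑(ContinuousLinearMap.proj (R := ℝ) (φ := fun _ : Fin d => ℝ) i)
        ∘ fun y => vResidMap d L A (Function.update x t y) t) := rfl
  rw [heq, Hi.fderiv]
  simp [Matrix.mulVec_single]
  simp [Pi.single_apply, Matrix.one_apply, Matrix.mul_apply, Matrix.mulVec, dotProduct]

lemma diag_block (x : Fin L → Fin d → ℝ) (t : Fin L) :
    (Matrix.of fun i j : Fin d =>
        fderiv ℝ (vResidMap d L A) x (Pi.single t (Pi.single j 1)) t i)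
      = (1 : Matrix (Fin d) (Fin d) ℝ) - vSigma d L A x t * A := by
  ext i j
  exact diag_entry x t i j

lemma Iio_empty_of_zero (t : Fin L) (ht : (t : ℕ) = 0) : Finset.Iio t = ∅ := by
  refine Finset.eq_empty_of_forall_notMem fun r hr => ?_
  have h1 : r < t := Finset.mem_Iio.mp hr
  have h2 : (r : ℕ) < (t : ℕ) := h1
  omega

lemma sigma_zero (x : Fin L → Fin d → ℝ) (t : Fin L) (ht : (t : ℕ) = 0) :
    vSigma d L A x t = 0 := by
  unfold vSigma
  rw [Iio_empty_of_zero t ht, Finset.sum_empty]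

/-! ### Determinant assembly -/

def blkEquiv (d L : ℕ) (k : (Fin L)ᵒᵈ) :
    Fin d ≃ {p : (Σ _ : Fin L, Fin d) // (fun p : (Σ _ : Fin L, Fin d) =>
      OrderDual.toDual p.1) p = k} where
  toFun i := ⟨⟨OrderDual.ofDual k, i⟩, rfl⟩
  invFun p := p.1.2
  left_inv i := rfl
  right_inv p := by
    rcases p with ⟨⟨s, j⟩, hp⟩
    have hs : s = OrderDual.ofDual k := congrArg OrderDual.ofDual hp
    subst hs
    rfl

lemma det_eq_prod (x : Fin L → Fin d → ℝ) :
    (fderiv ℝ (vResidMap d L A) x).det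
      = ∏ t : Fin L, (Matrix.of fun i j : Fin d =>
          fderiv ℝ (vResidMap d L A) x (Pi.single t (Pi.single j 1)) t i).det := by
  classical
  set f := fderiv ℝ (vResidMap d L A) x with hf
  let B : Module.Basis (Σ _ : Fin L, Fin d) ℝ (Fin L → Fin d → ℝ) :=
    Pi.basis fun _ : Fin L => Pi.basisFun ℝ (Fin d)
  have hM : ∀ p q : (Σ _ : Fin L, Fin d),
      LinearMap.toMatrix B B (↑f : (Fin L → Fin d → ℝ) →ₗ[ℝ] (Fin L → Fin d → ℝ)) p q
        = f (Pi.single q.1 (Pi.single q.2 1)) p.1 p.2 := by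
    intro p q
    rw [LinearMap.toMatrix_apply]
    rw [show B q = Pi.single q.1 (Pi.single q.2 1) by
      rcases q with ⟨s, j⟩
      simp [B, Pi.basis_apply, Pi.basisFun_apply]]
    rcases p with ⟨t, i⟩
    rw [show ∀ y : Fin L → Fin d → ℝ, B.repr y ⟨t, i⟩ = y t i from fun y => by
      simp [B, Pi.basis_repr, Pi.basisFun_repr]]
    rfl
  have hBT : (LinearMap.toMatrix B B
      (↑f : (Fin L → Fin d → ℝ) →ₗ[ℝ] (Fin L → Fin d → ℝ))).BlockTriangular
      (fun p : (Σ _ : Fin L, Fin d) => OrderDual.toDual p.1) := by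
    intro p q hlt
    rw [hM]
    exact offdiag_zero x p.1 q.1 hlt p.2 q.2
  have hdet : f.det = (LinearMap.toMatrix B B
      (↑f : (Fin L → Fin d → ℝ) →ₗ[ℝ] (Fin L → Fin d → ℝ))).det :=
    (LinearMap.det_toMatrix B _).symm
  rw [hdet, hBT.det_fintype]
  refine Fintype.prod_equiv (OrderDual.ofDual (α := Fin L)) _ _ fun k => ?_
  rw [← Matrix.det_submatrix_equiv_self (blkEquiv d L k)]
  congr 1
  ext i j
  simp only [Matrix.submatrix_apply, Matrix.toSquareBlock_def, Matrix.of_apply, blkEquiv,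
    Equiv.coe_fn_mk, hM]

end StrictCausalAux

open StrictCausalAux in
/-- The residual map `E` is differentiable; its block Jacobian satisfies `J_{ts}(x) = 0`
for `s > t`, the first diagonal block (t = 1, i.e. index 0) is `I_d`, and
`det DE(x) = ∏_t det(J_{tt}(x)) = ∏_{t=2}^L det(I_d − Σ_t(x)·A)`. -/
theorem stmt2 (d L : ℕ) (hd : 1 ≤ d) (hL : 1 ≤ L) (A : Matrix (Fin d) (Fin d) ℝ) :
    Differentiable ℝ (vResidMap d L A) ∧
    ∀ x : Fin L → Fin d → ℝ,
      (∀ t s : Fin L, t < s → ∀ i j : Fin d,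
        fderiv ℝ (vResidMap d L A) x (Pi.single s (Pi.single j 1)) t i = 0) ∧
      (∀ t : Fin L, (t : ℕ) = 0 →
        (Matrix.of fun i j : Fin d =>
          fderiv ℝ (vResidMap d L A) x (Pi.single t (Pi.single j 1)) t i) =
          (1 : Matrix (Fin d) (Fin d) ℝ)) ∧
      ((fderiv ℝ (vResidMap d L A) x).det =
        ∏ t : Fin L, (Matrix.of fun i j : Fin d =>
          fderiv ℝ (vResidMap d L A) x (Pi.single t (Pi.single j 1)) t i).det) ∧
      (fderiv ℝ (vResidMap d L A) x).det =
        ∏ t ∈ Finset.univ.filter (fun t : Fin L => 1 ≤ (t : ℕ)),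
          ((1 : Matrix (Fin d) (Fin d) ℝ) - vSigma d L A x t * A).det := by
  refine ⟨diff_resid, fun x => ⟨?_, ?_, ?_, ?_⟩⟩
  · intro t s hts i j
    exact offdiag_zero x t s hts i j
  · intro t ht
    rw [diag_block, sigma_zero x t ht, Matrix.zero_mul, sub_zero]
  · exact det_eq_prod x
  · rw [det_eq_prod x]
    have h1 : ∀ t : Fin L, (Matrix.of fun i j : Fin d =>
        fderiv ℝ (vResidMap d L A) x (Pi.single t (Pi.single j 1)) t i).det
        = ((1 : Matrix (Fin d) (Fin d) ℝ) - vSigma d L A x t * A).det := fun t => by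
      rw [diag_block]
    rw [Finset.prod_congr rfl fun t _ => h1 t]
    refine (Finset.prod_subset (Finset.filter_subset _ _) fun t _ ht => ?_).symm
    have ht0 : (t : ℕ) = 0 := by
      by_contra h
      exact ht (Finset.mem_filter.mpr ⟨Finset.mem_univ t, by omega⟩)
    rw [sigma_zero x t ht0, Matrix.zero_mul, sub_zero, Matrix.det_one]

end
end

section
/- Let σ > 0 and let γ_σ : ℝ^{dL} → ℝ be the Gaussian density γ_σ(ε) = (2πσ²)^{−dL/2} exp(−‖ε‖²/(2σ²)). Let S ⊆ (ℝ^d)^L be a measurable set on which E is injective and on which det(I_d − Σ_t(x)·A) ≠ 0 for all x ∈ S and all 2 ≤ t ≤ L. Then ∫_{E(S)} γ_σ(ε) dε = ∫_S γ_σ(E(x)) · ∏_{t=2}^L |det(I_d − Σ_t(x)·A)| dx (integrals with respect to Lebesgue measure); moreover the induced density p(x) := γ_σ(E(x)) · ∏_{t=2}^L |det(I_d − Σ_t(x)·A)| satisfies, for every x ∈ S, log p(x) = −(1/(2σ²)) Σ_{t=1}^L ‖e_t(x)‖² + Σ_{t=2}^L log|det(I_d − Σ_t(x)·A)| − dL·log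 σ − (dL/2)·log(2π). -/
/- Vector strict-causal attention context (0-indexed positions via `Fin L`):
   μ_t(x), covariance Σ_t(x), residual e_t(x) = x_t − μ_t(x), residual map E = vResidMap.
   (ℝ^d)^L ≅ ℝ^{dL} carries Lebesgue measure (the pi `volume`), and the Gaussian density is
   γ_σ(ε) = (2πσ²)^{−dL/2} exp(−‖ε‖²/(2σ²)) with ‖ε‖² = Σ_t Σ_i ε_{t,i}². -/

noncomputable section

open Matrix MeasureTheory

/-- The Gaussian density γ_σ on (ℝ^d)^L ≅ ℝ^{dL} (Euclidean norm). -/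
def gaussDensity (d L : ℕ) (σ : ℝ) (ε : Fin L → Fin d → ℝ) : ℝ :=
  (2 * Real.pi * σ ^ 2) ^ (-(d * L : ℝ) / 2) *
    Real.exp (-(∑ t : Fin L, ∑ i : Fin d, ε t i ^ 2) / (2 * σ ^ 2))

-- assume defs from w1 present (will concatenate); here re-import by pasting
noncomputable section
open Matrix MeasureTheory

variable {d L : ℕ}

def pr (t : Fin L) (i : Fin d) : (Fin L → Fin d → ℝ) →L[ℝ] ℝ :=
  (ContinuousLinearMap.proj (R := ℝ) (φ := fun _ : Fin d => ℝ) i).comp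
    (ContinuousLinearMap.proj t)

@[simp] lemma pr_apply (t : Fin L) (i : Fin d) (u : Fin L → Fin d → ℝ) : pr t i u = u t i := rfl

def dDot (A : Matrix (Fin d) (Fin d) ℝ) (x : Fin L → Fin d → ℝ) (t s : Fin L) :
    (Fin L → Fin d → ℝ) →L[ℝ] ℝ :=
  (∑ i, (Aᵀ *ᵥ x s) i • pr t i) + (∑ j, (A *ᵥ x t) j • pr s j)

lemma dDot_apply (A : Matrix (Fin d) (Fin d) ℝ) (x : Fin L → Fin d → ℝ) (t s : Fin L)
    (u : Fin L → Fin d → ℝ) :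
    dDot A x t s u = u t ⬝ᵥ (Aᵀ *ᵥ x s) + x t ⬝ᵥ (Aᵀ *ᵥ u s) := by
  simp only [dDot, ContinuousLinearMap.add_apply, ContinuousLinearMap.coe_sum',
    Finset.sum_apply, ContinuousLinearMap.coe_smul', Pi.smul_apply, pr_apply, smul_eq_mul,
    dotProduct, mulVec, transpose_apply]
  congr 1
  · exact Finset.sum_congr rfl fun i _ => by ring
  · simp only [Finset.sum_mul, Finset.mul_sum]
    rw [Finset.sum_comm]
    exact Finset.sum_congr rfl fun i _ => Finset.sum_congr rfl fun j _ => by ring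

lemma hasFDerivAt_dot (A : Matrix (Fin d) (Fin d) ℝ) (x : Fin L → Fin d → ℝ) (t s : Fin L) :
    HasFDerivAt (fun y : Fin L → Fin d → ℝ => y t ⬝ᵥ (Aᵀ *ᵥ y s)) (dDot A x t s) x := by
  have h : (fun y : Fin L → Fin d → ℝ => y t ⬝ᵥ (Aᵀ *ᵥ y s)) =
      fun y => ∑ i, ∑ j, A j i * (y t i * y s j) := by
    funext y
    simp only [dotProduct, mulVec, transpose_apply, Finset.mul_sum]
    exact Finset.sum_congr rfl fun i _ => Finset.sum_congr rfl fun j _ => by ring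
  rw [h]
  have H := HasFDerivAt.fun_sum (u := Finset.univ) (x := x)
    (A := fun i (y : Fin L → Fin d → ℝ) => ∑ j, A j i * (y t i * y s j))
    (A' := fun i => ∑ j, A j i • (x t i • pr s j + x s j • pr t i))
    (fun i _ => HasFDerivAt.fun_sum (fun j _ =>
      ((((pr t i).hasFDerivAt (x := x)).mul ((pr s j).hasFDerivAt (x := x))).const_mul (A j i))))
  refine H.congr_fderiv ?_
  ext u
  simp only [ContinuousLinearMap.coe_sum', Finset.sum_apply, ContinuousLinearMap.coe_smul',
    Pi.smul_apply, ContinuousLinearMap.add_apply, pr_apply, smul_eq_mul, dDot_apply,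
    dotProduct, mulVec, transpose_apply, mul_add, Finset.sum_add_distrib]
  rw [add_comm]
  congr 1
  · simp only [Finset.mul_sum]
    exact Finset.sum_congr rfl fun i _ => Finset.sum_congr rfl fun j _ => by ring
  · simp only [Finset.mul_sum, Finset.sum_mul]
    exact Finset.sum_congr rfl fun i _ => Finset.sum_congr rfl fun j _ => by ring



variable {d L : ℕ}

def vDen (A : Matrix (Fin d) (Fin d) ℝ) (x : Fin L → Fin d → ℝ) (t : Fin L) : ℝ :=
  ∑ r ∈ Finset.Iio t, Real.exp (x t ⬝ᵥ (Aᵀ *ᵥ x r))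

lemma vDen_pos (A : Matrix (Fin d) (Fin d) ℝ) (x : Fin L → Fin d → ℝ) {t : Fin L}
    (ht : (Finset.Iio t).Nonempty) : 0 < vDen A x t :=
  Finset.sum_pos (fun _ _ => Real.exp_pos _) ht

/-- the derivative of the (t,i) component of the residual map -/
def ellD (A : Matrix (Fin d) (Fin d) ℝ) (x : Fin L → Fin d → ℝ) (t : Fin L) (i : Fin d) :
    (Fin L → Fin d → ℝ) →L[ℝ] ℝ :=
  pr t i - ∑ s ∈ Finset.Iio t,
    ((Real.exp (x t ⬝ᵥ (Aᵀ *ᵥ x s)) * (vDen A x t)⁻¹) • pr s i +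
      x s i • (Real.exp (x t ⬝ᵥ (Aᵀ *ᵥ x s)) •
          ((-(vDen A x t ^ 2)⁻¹) • ∑ r ∈ Finset.Iio t,
              Real.exp (x t ⬝ᵥ (Aᵀ *ᵥ x r)) • dDot A x t r) +
        (vDen A x t)⁻¹ • (Real.exp (x t ⬝ᵥ (Aᵀ *ᵥ x s)) • dDot A x t s)))

lemma hasFDerivAt_component (A : Matrix (Fin d) (Fin d) ℝ) (x : Fin L → Fin d → ℝ)
    (t : Fin L) (i : Fin d) :
    HasFDerivAt (fun y => vResidMap d L A y t i) (ellD A x t i) x := by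
  have hfun : (fun y => vResidMap d L A y t i) =
      fun y : Fin L → Fin d → ℝ => y t i - ∑ s ∈ Finset.Iio t,
        (Real.exp (y t ⬝ᵥ (Aᵀ *ᵥ y s)) * (vDen A y t)⁻¹) * y s i := by
    funext y
    simp only [vResidMap, vMu, Pi.sub_apply, Finset.sum_apply, Pi.smul_apply, smul_eq_mul,
      div_eq_mul_inv, vDen]
  rw [hfun]
  rcases (Finset.Iio t).eq_empty_or_nonempty with h | h
  · simp [h, ellD]; exact ((pr t i).hasFDerivAt (x := x))
  · have hden : vDen A x t ≠ 0 := (vDen_pos A x h).ne'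
    have hg : HasFDerivAt (fun y => vDen A y t)
        (∑ r ∈ Finset.Iio t, Real.exp (x t ⬝ᵥ (Aᵀ *ᵥ x r)) • dDot A x t r) x :=
      HasFDerivAt.fun_sum (fun r _ => (hasFDerivAt_dot A x t r).exp)
    have hinv : HasFDerivAt (fun y => (vDen A y t)⁻¹)
        ((-(vDen A x t ^ 2)⁻¹) • ∑ r ∈ Finset.Iio t,
            Real.exp (x t ⬝ᵥ (Aᵀ *ᵥ x r)) • dDot A x t r) x :=
      (hasDerivAt_inv hden).comp_hasFDerivAt x hg
    exact ((pr t i).hasFDerivAt (x := x)).sub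
      (HasFDerivAt.fun_sum (fun s _ =>
        ((((hasFDerivAt_dot A x t s).exp).mul hinv).mul ((pr s i).hasFDerivAt (x := x)))))

def DmapCLM (A : Matrix (Fin d) (Fin d) ℝ) (x : Fin L → Fin d → ℝ) :
    (Fin L → Fin d → ℝ) →L[ℝ] (Fin L → Fin d → ℝ) :=
  ContinuousLinearMap.pi fun t => ContinuousLinearMap.pi fun i => ellD A x t i

lemma hasFDerivAt_resid (A : Matrix (Fin d) (Fin d) ℝ) (x : Fin L → Fin d → ℝ) :
    HasFDerivAt (vResidMap d L A) (DmapCLM A x) x := by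
  rw [hasFDerivAt_pi']
  intro t
  rw [DmapCLM, ContinuousLinearMap.proj_pi, hasFDerivAt_pi']
  intro i
  rw [ContinuousLinearMap.proj_pi]
  exact hasFDerivAt_component A x t i

@[simp] lemma single_app (s : Fin L) (j : Fin d) (t : Fin L) (i : Fin d) :
    (Pi.single s (Pi.single j 1) : Fin L → Fin d → ℝ) t i
      = if t = s ∧ i = j then 1 else 0 := by
  rcases eq_or_ne t s with rfl | h
  · simp [Pi.single_apply]
  · simp [Pi.single_eq_of_ne h, h]

lemma ellD_single_of_lt (A : Matrix (Fin d) (Fin d) ℝ) (x : Fin L → Fin d → ℝ)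
    {t s : Fin L} (hts : t < s) (i j : Fin d) :
    ellD A x t i (Pi.single s (Pi.single j 1)) = 0 := by
  have h1 : (Pi.single s (Pi.single j 1) : Fin L → Fin d → ℝ) t = 0 :=
    Pi.single_eq_of_ne hts.ne _
  have h2 : ∀ r ∈ Finset.Iio t, (Pi.single s (Pi.single j 1) : Fin L → Fin d → ℝ) r = 0 :=
    fun r hr => Pi.single_eq_of_ne ((Finset.mem_Iio.mp hr).trans hts).ne _
  simp only [ellD, ContinuousLinearMap.sub_apply, pr_apply, ContinuousLinearMap.coe_sum',
    Finset.sum_apply, ContinuousLinearMap.add_apply, ContinuousLinearMap.coe_smul',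
    Pi.smul_apply, smul_eq_mul, dDot_apply, h1, Pi.zero_apply, zero_sub, neg_eq_zero]
  refine Finset.sum_eq_zero fun r hr => ?_
  rw [h2 r hr]
  have hz : ∀ r' ∈ Finset.Iio t,
      Real.exp (x t ⬝ᵥ (Aᵀ *ᵥ x r')) *
        ((0 : Fin d → ℝ) ⬝ᵥ (Aᵀ *ᵥ x r') +
          x t ⬝ᵥ (Aᵀ *ᵥ (Pi.single s (Pi.single j 1) : Fin L → Fin d → ℝ) r')) = 0 :=
    fun r' hr' => by rw [h2 r' hr']; simp
  rw [Finset.sum_eq_zero hz]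
  simp


lemma sum_algebra {ι : Type*} (F : Finset ι) (e xx w : ι → ℝ) (g : ℝ)
    (hg : (∑ s ∈ F, e s) = g) (hgne : g ≠ 0) :
    ∑ s ∈ F, (e s * xx s * ((∑ r ∈ F, e r * w r) * -(g ^ 2)⁻¹) + e s * xx s * w s * g⁻¹)
      = ∑ s ∈ F, (e s / g) * ((xx s - (∑ r ∈ F, e r * xx r) / g) *
          (w s - (∑ r ∈ F, e r * w r) / g)) := by
  set S2 := ∑ r ∈ F, e r * xx r with hS2
  set S3 := ∑ r ∈ F, e r * w r with hS3
  have hL : ∑ s ∈ F, (e s * xx s * (S3 * -(g ^ 2)⁻¹) + e s * xx s * w s * g⁻¹)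
      = S2 * (S3 * -(g ^ 2)⁻¹) + (∑ s ∈ F, e s * xx s * w s) * g⁻¹ := by
    rw [Finset.sum_add_distrib, ← Finset.sum_mul, ← Finset.sum_mul, ← hS2]
  have hR : ∑ s ∈ F, (e s / g) * ((xx s - S2 / g) * (w s - S3 / g))
      = (∑ s ∈ F, e s * xx s * w s) * (g⁻¹)
        - S2 * (S3 / g * g⁻¹) - S3 * (S2 / g * g⁻¹) + g * (S2 / g * (S3 / g) * g⁻¹) := by
    have : ∀ s ∈ F, (e s / g) * ((xx s - S2 / g) * (w s - S3 / g))
        = e s * xx s * w s * g⁻¹ - e s * xx s * (S3 / g * g⁻¹)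
          - e s * w s * (S2 / g * g⁻¹) + e s * (S2 / g * (S3 / g) * g⁻¹) := by
      intro s _; field_simp; ring
    rw [Finset.sum_congr rfl this]
    simp only [Finset.sum_add_distrib, Finset.sum_sub_distrib, ← Finset.sum_mul, hg, ← hS2, ← hS3]
  rw [hL, hR]
  field_simp
  ring

lemma ellD_single_diag (A : Matrix (Fin d) (Fin d) ℝ) (x : Fin L → Fin d → ℝ)
    (t : Fin L) (i j : Fin d) :
    ellD A x t i (Pi.single t (Pi.single j 1)) =
      ((1 : Matrix (Fin d) (Fin d) ℝ) - vSigma d L A x t * A) i j := by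
  have h1 : (Pi.single t (Pi.single j 1) : Fin L → Fin d → ℝ) t = Pi.single j 1 :=
    Pi.single_eq_same t _
  have h2 : ∀ r ∈ Finset.Iio t, (Pi.single t (Pi.single j 1) : Fin L → Fin d → ℝ) r = 0 :=
    fun r hr => Pi.single_eq_of_ne (Finset.mem_Iio.mp hr).ne _
  rcases (Finset.Iio t).eq_empty_or_nonempty with h | h
  · simp [ellD, vSigma, h, h1, Matrix.one_apply, Pi.single_apply]
  · have hden : vDen A x t ≠ 0 := (vDen_pos A x h).ne'
    simp only [ellD, ContinuousLinearMap.sub_apply, pr_apply, ContinuousLinearMap.coe_sum',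
      Finset.sum_apply, ContinuousLinearMap.add_apply, ContinuousLinearMap.coe_smul',
      Pi.smul_apply, smul_eq_mul, dDot_apply, h1, single_dotProduct, one_mul,
      Matrix.sub_apply, Matrix.one_apply, Matrix.mul_apply, vSigma, Matrix.smul_apply,
      Matrix.vecMulVec_apply, Pi.sub_apply, Matrix.sum_apply]
    have hW : ∀ r' ∈ Finset.Iio t,
        Real.exp (x t ⬝ᵥ (Aᵀ *ᵥ x r')) * ((Aᵀ *ᵥ x r') j +
          x t ⬝ᵥ (Aᵀ *ᵥ (Pi.single t (Pi.single j 1) : Fin L → Fin d → ℝ) r')) =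
        Real.exp (x t ⬝ᵥ (Aᵀ *ᵥ x r')) * (Aᵀ *ᵥ x r') j :=
      fun r' hr' => by rw [h2 r' hr']; simp
    rw [Finset.sum_congr rfl hW]
    congr 1
    · simp [Pi.single_apply]
    have hmv : ∀ v : Fin d → ℝ, (Aᵀ *ᵥ v) j = ∑ k, v k * A k j := fun v => by
      simp [Matrix.mulVec, dotProduct, Matrix.transpose_apply, mul_comm]
    have hmu : ∀ k, vMu d L A x t k =
        (∑ s ∈ Finset.Iio t, Real.exp (x t ⬝ᵥ (Aᵀ *ᵥ x s)) * x s k) / vDen A x t := by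
      intro k
      simp only [vMu, Finset.sum_apply, Pi.smul_apply, smul_eq_mul, vDen]
      rw [Finset.sum_div]
      exact Finset.sum_congr rfl fun s _ => by rw [div_mul_eq_mul_div]
    trans (∑ s ∈ Finset.Iio t,
      (Real.exp (x t ⬝ᵥ (Aᵀ *ᵥ x s)) * x s i *
          ((∑ r ∈ Finset.Iio t, Real.exp (x t ⬝ᵥ (Aᵀ *ᵥ x r)) * (Aᵀ *ᵥ x r) j) *
            -(vDen A x t ^ 2)⁻¹) +
        Real.exp (x t ⬝ᵥ (Aᵀ *ᵥ x s)) * x s i * (Aᵀ *ᵥ x s) j * (vDen A x t)⁻¹))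
    · refine Finset.sum_congr rfl fun s hs => ?_
      rw [h2 s hs]
      simp only [Pi.zero_apply, mul_zero, zero_mul, zero_add, Matrix.mulVec_zero,
        dotProduct_zero, add_zero]
      ring
    rw [sum_algebra (Finset.Iio t) (fun s => Real.exp (x t ⬝ᵥ (Aᵀ *ᵥ x s))) (fun s => x s i)
      (fun s => (Aᵀ *ᵥ x s) j) (vDen A x t) rfl hden]
    symm
    have hfold : (∑ r ∈ Finset.Iio t, Real.exp (x t ⬝ᵥ (Aᵀ *ᵥ x r))) = vDen A x t := rfl
    simp only [hmu, hfold]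
    simp only [Finset.sum_mul]
    rw [Finset.sum_comm]
    refine Finset.sum_congr rfl fun s hs => ?_
    have hb : ∑ j1, ((x s j1 -
          (∑ r ∈ Finset.Iio t, Real.exp (x t ⬝ᵥ (Aᵀ *ᵥ x r)) * x r j1) / vDen A x t) * A j1 j)
        = (Aᵀ *ᵥ x s) j -
          (∑ r ∈ Finset.Iio t, Real.exp (x t ⬝ᵥ (Aᵀ *ᵥ x r)) * (Aᵀ *ᵥ x r) j) / vDen A x t := by
      simp only [sub_mul, Finset.sum_sub_distrib]
      congr 1
      · exact (hmv _).symm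
      · have : ∀ j1, (∑ r ∈ Finset.Iio t, Real.exp (x t ⬝ᵥ (Aᵀ *ᵥ x r)) * x r j1) / vDen A x t
            * A j1 j
            = (∑ r ∈ Finset.Iio t, Real.exp (x t ⬝ᵥ (Aᵀ *ᵥ x r)) * (x r j1 * A j1 j))
              / vDen A x t := by
          intro j1
          rw [div_mul_eq_mul_div, Finset.sum_mul]
          congr 1
          exact Finset.sum_congr rfl fun r _ => by ring
        rw [Finset.sum_congr rfl fun j1 _ => this j1, ← Finset.sum_div]
        congr 1
        rw [Finset.sum_comm]
        exact Finset.sum_congr rfl fun r _ => by rw [← Finset.mul_sum, hmv]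
    calc ∑ j1, (Real.exp (x t ⬝ᵥ (Aᵀ *ᵥ x s)) / vDen A x t *
            ((x s i - (∑ r ∈ Finset.Iio t, Real.exp (x t ⬝ᵥ (Aᵀ *ᵥ x r)) * x r i) / vDen A x t) *
              (x s j1 -
                (∑ r ∈ Finset.Iio t, Real.exp (x t ⬝ᵥ (Aᵀ *ᵥ x r)) * x r j1) / vDen A x t))) *
          A j1 j
        = Real.exp (x t ⬝ᵥ (Aᵀ *ᵥ x s)) / vDen A x t *
            ((x s i - (∑ r ∈ Finset.Iio t, Real.exp (x t ⬝ᵥ (Aᵀ *ᵥ x r)) * x r i) / vDen A x t) *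
              ∑ j1, ((x s j1 -
                (∑ r ∈ Finset.Iio t, Real.exp (x t ⬝ᵥ (Aᵀ *ᵥ x r)) * x r j1) / vDen A x t)
                  * A j1 j)) := by
          rw [Finset.mul_sum, Finset.mul_sum]
          exact Finset.sum_congr rfl fun j1 _ => by ring
      _ = _ := by rw [hb]

lemma det_DmapCLM (A : Matrix (Fin d) (Fin d) ℝ) (x : Fin L → Fin d → ℝ) (hd : 1 ≤ d) :
    (DmapCLM A x).det =
      ∏ t : Fin L, ((1 : Matrix (Fin d) (Fin d) ℝ) - vSigma d L A x t * A).det := by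
  classical
  let b : Module.Basis ((_ : Fin L) × Fin d) ℝ (Fin L → Fin d → ℝ) :=
    Pi.basis fun _ : Fin L => Pi.basisFun ℝ (Fin d)
  have hdet : (DmapCLM A x).det = (LinearMap.toMatrix b b (DmapCLM A x : _ →ₗ[ℝ] _)).det :=
    (LinearMap.det_toMatrix b _).symm
  set M := LinearMap.toMatrix b b (DmapCLM A x : _ →ₗ[ℝ] _) with hM
  have hMentry : ∀ p q : (_ : Fin L) × Fin d,
      M p q = ellD A x p.1 p.2 (Pi.single q.1 (Pi.single q.2 1)) := by
    intro p q
    rw [hM, LinearMap.toMatrix_apply]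
    have hb : b q = Pi.single q.1 (Pi.single q.2 1) := by
      simp [b, Pi.basis_apply]
    rw [hb]
    simp [b, Pi.basis_repr, Pi.basisFun_repr, DmapCLM]
  have hBT : (Mᵀ).BlockTriangular Sigma.fst := by
    intro p q hlt
    rw [Matrix.transpose_apply, hMentry]
    exact ellD_single_of_lt A x hlt _ _
  have hblock : ∀ t : Fin L, ((Mᵀ).toSquareBlock Sigma.fst t).det =
      ((1 : Matrix (Fin d) (Fin d) ℝ) - vSigma d L A x t * A).det := by
    intro t
    let e : Fin d ≃ {p : (_ : Fin L) × Fin d // p.1 = t} :=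
      { toFun := fun i => ⟨⟨t, i⟩, rfl⟩
        invFun := fun p => p.1.2
        left_inv := fun i => rfl
        right_inv := fun p => by
          rcases p with ⟨⟨t', i⟩, hp⟩
          subst hp; rfl }
    have hsub : ((Mᵀ).toSquareBlock Sigma.fst t).submatrix e e
        = ((1 : Matrix (Fin d) (Fin d) ℝ) - vSigma d L A x t * A)ᵀ := by
      ext i j
      simp only [Matrix.submatrix_apply, Matrix.toSquareBlock_def, Matrix.transpose_apply,
        Matrix.of_apply]
      rw [hMentry]
      exact ellD_single_diag A x t j i
    rw [← Matrix.det_submatrix_equiv_self e, hsub, Matrix.det_transpose]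
  rw [hdet, ← Matrix.det_transpose M, hBT.det]
  have himg : Finset.image (Sigma.fst : (_ : Fin L) × Fin d → Fin L) Finset.univ
      = Finset.univ := by
    apply Finset.eq_univ_iff_forall.mpr
    intro t
    exact Finset.mem_image.mpr ⟨⟨t, ⟨0, hd⟩⟩, Finset.mem_univ _, rfl⟩
  rw [himg]
  exact Finset.prod_congr rfl fun t _ => hblock t

/-- Change of variables for the residual map on a set `S` where `E` is injective and the
diagonal Jacobian factors are nonzero, together with the log-density decomposition of the
induced density `p(x) = γ_σ(E(x))·∏_{t=2}^L |det(I_d − Σ_t(x)A)|`. -/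
theorem stmt3 (d L : ℕ) (hd : 1 ≤ d) (hL : 1 ≤ L) (A : Matrix (Fin d) (Fin d) ℝ)
    (σ : ℝ) (hσ : 0 < σ) (S : Set (Fin L → Fin d → ℝ)) (hS : MeasurableSet S)
    (hinj : Set.InjOn (vResidMap d L A) S)
    (hdet : ∀ x ∈ S, ∀ t : Fin L, 1 ≤ (t : ℕ) →
      ((1 : Matrix (Fin d) (Fin d) ℝ) - vSigma d L A x t * A).det ≠ 0) :
    ((∫ ε in vResidMap d L A '' S, gaussDensity d L σ ε) =
      ∫ x in S, gaussDensity d L σ (vResidMap d L A x) *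
        ∏ t ∈ Finset.univ.filter (fun t : Fin L => 1 ≤ (t : ℕ)),
          |((1 : Matrix (Fin d) (Fin d) ℝ) - vSigma d L A x t * A).det|) ∧
    (∀ x ∈ S,
      Real.log (gaussDensity d L σ (vResidMap d L A x) *
        ∏ t ∈ Finset.univ.filter (fun t : Fin L => 1 ≤ (t : ℕ)),
          |((1 : Matrix (Fin d) (Fin d) ℝ) - vSigma d L A x t * A).det|) =
      -(1 / (2 * σ ^ 2)) * (∑ t : Fin L, ∑ i : Fin d, vResidMap d L A x t i ^ 2) +
        (∑ t ∈ Finset.univ.filter (fun t : Fin L => 1 ≤ (t : ℕ)),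
          Real.log |((1 : Matrix (Fin d) (Fin d) ℝ) - vSigma d L A x t * A).det|) -
        (d * L : ℝ) * Real.log σ - ((d * L : ℝ) / 2) * Real.log (2 * Real.pi)) := by
  classical
  have hder : ∀ y ∈ S, HasFDerivWithinAt (vResidMap d L A) (DmapCLM A y) S y :=
    fun y _ => (hasFDerivAt_resid A y).hasFDerivWithinAt
  have habs : ∀ y : Fin L → Fin d → ℝ, |(DmapCLM A y).det| =
      ∏ t ∈ Finset.univ.filter (fun t : Fin L => 1 ≤ (t : ℕ)),
        |((1 : Matrix (Fin d) (Fin d) ℝ) - vSigma d L A y t * A).det| := by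
    intro y
    rw [det_DmapCLM A y hd, Finset.abs_prod, Finset.prod_filter]
    refine Finset.prod_congr rfl fun t _ => ?_
    split_ifs with ht
    · rfl
    · have h0 : Finset.Iio t = ∅ := by
        refine Finset.eq_empty_iff_forall_notMem.mpr fun s hs => ?_
        have := Finset.mem_Iio.mp hs
        have hlt : (s : ℕ) < (t : ℕ) := this
        omega
      simp [vSigma, h0]
  constructor
  · rw [integral_image_eq_integral_abs_det_fderiv_smul volume hS hder hinj (gaussDensity d L σ)]
    refine setIntegral_congr_fun hS fun y _ => ?_
    rw [smul_eq_mul, habs y, mul_comm]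
  · intro x hx
    have hfilt : ∀ t ∈ Finset.univ.filter (fun t : Fin L => 1 ≤ (t : ℕ)),
        |((1 : Matrix (Fin d) (Fin d) ℝ) - vSigma d L A x t * A).det| ≠ 0 :=
      fun t ht => abs_ne_zero.mpr (hdet x hx t (Finset.mem_filter.mp ht).2)
    have hPne : (∏ t ∈ Finset.univ.filter (fun t : Fin L => 1 ≤ (t : ℕ)),
        |((1 : Matrix (Fin d) (Fin d) ℝ) - vSigma d L A x t * A).det|) ≠ 0 :=
      Finset.prod_ne_zero_iff.mpr hfilt
    have h2pi : (0:ℝ) < 2 * Real.pi * σ ^ 2 := by positivity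
    have hCpos : (0:ℝ) < (2 * Real.pi * σ ^ 2) ^ (-(d * L : ℝ) / 2) :=
      Real.rpow_pos_of_pos h2pi _
    rw [gaussDensity, mul_assoc, Real.log_mul (ne_of_gt hCpos)
        (mul_ne_zero (Real.exp_ne_zero _) hPne),
      Real.log_mul (Real.exp_ne_zero _) hPne, Real.log_exp,
      Real.log_rpow h2pi,
      Real.log_prod hfilt,
      Real.log_mul (by positivity) (by positivity),
      Real.log_pow]
    have hπ : Real.log 2 + Real.log Real.pi = Real.log (2 * Real.pi) := by
      rw [Real.log_mul (by norm_num) (ne_of_gt Real.pi_pos)]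
    rw [show Real.log (2 * Real.pi) = Real.log 2 + Real.log Real.pi from hπ.symm] at *
    push_cast
    ring

end
end
end

section
/- The scalar residual map E is differentiable on ℝ^L; its Jacobian matrix at x satisfies ∂e_t/∂x_s = 0 whenever s > t, and its determinant equals det DE(x) = ∏_{t=2}^L (1 − a·Var_t(x)) for every x ∈ ℝ^L (the t = 1 diagonal entry being 1). -/
/- Scalar strict-causal attention context (0-indexed positions via `Fin L`):
   μ_t(x) = Σ_{s<t} α_{ts}(x) x_s with α_{ts}(x) = exp(a x_t x_s)/Σ_{r<t} exp(a x_t x_r),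
   Var_t(x) the attention-weighted variance, e_t(x) = x_t - μ_t(x),
   E = residMap the residual map. -/

noncomputable section

def residMap (L : ℕ) (a : ℝ) (x : Fin L → ℝ) : Fin L → ℝ :=
  fun t => x t - attnMu L a x t

namespace Stmt4Aux

open Finset Real

variable {L : ℕ}

def Zf (a : ℝ) (t : Fin L) (x : Fin L → ℝ) : ℝ :=
  ∑ r ∈ Finset.Iio t, Real.exp (a * x t * x r)

def Nf (a : ℝ) (t : Fin L) (x : Fin L → ℝ) : ℝ :=
  ∑ r ∈ Finset.Iio t, Real.exp (a * x t * x r) * x r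

lemma mu_eq (a : ℝ) (t : Fin L) (x : Fin L → ℝ) :
    attnMu L a x t = Nf a t x / Zf a t x := by
  unfold attnMu Nf Zf
  rw [Finset.sum_div]
  exact Finset.sum_congr rfl fun s _ => by ring

lemma Iio_empty (t : Fin L) (ht : (t : ℕ) = 0) : Finset.Iio t = ∅ := by
  ext s
  simp only [Finset.mem_Iio, Finset.notMem_empty, iff_false, not_lt, Fin.le_def, ht]
  exact Nat.zero_le _

lemma Zf_pos (a : ℝ) (t : Fin L) (ht : 0 < (t : ℕ)) (x : Fin L → ℝ) : 0 < Zf a t x := by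
  apply Finset.sum_pos (fun r _ => Real.exp_pos _)
  exact ⟨⟨0, lt_of_le_of_lt (Nat.zero_le _) t.isLt⟩, by
    simp only [Finset.mem_Iio, Fin.lt_def]; exact ht⟩

lemma diff_Zf (a : ℝ) (t : Fin L) : Differentiable ℝ (Zf a t) := by
  apply Differentiable.fun_sum; intro r _; fun_prop

lemma diff_Nf (a : ℝ) (t : Fin L) : Differentiable ℝ (Nf a t) := by
  apply Differentiable.fun_sum; intro r _; fun_prop

lemma diff_mu (a : ℝ) (t : Fin L) : Differentiable ℝ fun x : Fin L → ℝ => attnMu L a x t := by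
  rcases Nat.eq_zero_or_pos (t : ℕ) with ht | ht
  · have h : (fun x : Fin L → ℝ => attnMu L a x t) = fun _ => 0 := by
      funext x; simp [attnMu, Iio_empty t ht]
    rw [h]; exact differentiable_const 0
  · have h : (fun x : Fin L → ℝ => attnMu L a x t) = fun x => Nf a t x * (Zf a t x)⁻¹ := by
      funext x; rw [mu_eq a t x, div_eq_mul_inv]
    rw [h]
    intro y
    exact ((diff_Nf a t) y).mul (((diff_Zf a t) y).inv (Zf_pos a t ht y).ne')

lemma diff_comp (a : ℝ) (t : Fin L) :
    Differentiable ℝ fun x : Fin L → ℝ => residMap L a x t := by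
  have : (fun x : Fin L → ℝ => residMap L a x t) = fun x => x t - attnMu L a x t := rfl
  rw [this]
  exact (differentiable_apply t).sub (diff_mu a t)

lemma diff_resid (a : ℝ) : Differentiable ℝ (residMap L a) :=
  differentiable_pi.2 fun t => diff_comp a t

lemma entry (a : ℝ) (x : Fin L → ℝ) (t s : Fin L) :
    fderiv ℝ (residMap L a) x (Pi.single s 1) t
      = fderiv ℝ (fun y => residMap L a y t) x (Pi.single s 1) := by
  have h := fderiv_pi (𝕜 := ℝ) (φ := fun i (y : Fin L → ℝ) => residMap L a y i) (x := x)
    (fun i => (diff_comp a i).differentiableAt)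
  have h2 : fderiv ℝ (residMap L a) x = fderiv ℝ (fun y i => residMap L a y i) x := rfl
  rw [h2, h]
  rfl

lemma dirDeriv {g : (Fin L → ℝ) → ℝ} {x : Fin L → ℝ} (hg : DifferentiableAt ℝ g x)
    (v : Fin L → ℝ) :
    HasDerivAt (fun h : ℝ => g (x + h • v)) (fderiv ℝ g x v) 0 := by
  have hline : HasDerivAt (fun h : ℝ => x + h • v) v 0 := by
    simpa using ((hasDerivAt_id (0 : ℝ)).smul_const v).const_add x
  have hx : x + (0 : ℝ) • v = x := by simp
  have hfd : HasFDerivAt g (fderiv ℝ g x) ((fun h : ℝ => x + h • v) 0) := by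
    simpa [hx] using hg.hasFDerivAt
  exact hfd.comp_hasDerivAt 0 hline

lemma entry_zero (a : ℝ) (x : Fin L → ℝ) (t s : Fin L) (hts : t < s) :
    fderiv ℝ (fun y => residMap L a y t) x (Pi.single s 1) = 0 := by
  have key : (fun h : ℝ => residMap L a (x + h • (Pi.single s 1 : Fin L → ℝ)) t)
      = fun _ => residMap L a x t := by
    funext h
    set u := x + h • (Pi.single s 1 : Fin L → ℝ) with hu
    have hc : ∀ r : Fin L, r ≠ s → u r = x r := by
      intro r hr; rw [hu]; simp [Pi.single_eq_of_ne hr]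
    have hct : u t = x t := hc t (ne_of_lt hts)
    have hr' : ∀ r ∈ Finset.Iio t, u r = x r := fun r hr =>
      hc r (ne_of_lt ((Finset.mem_Iio.mp hr).trans hts))
    have hNf : Nf a t u = Nf a t x :=
      Finset.sum_congr rfl fun r hr => by rw [hct, hr' r hr]
    have hZf : Zf a t u = Zf a t x :=
      Finset.sum_congr rfl fun r hr => by rw [hct, hr' r hr]
    show u t - attnMu L a u t = x t - attnMu L a x t
    rw [mu_eq, mu_eq, hNf, hZf, hct]
  have h1 := dirDeriv ((diff_comp a t).differentiableAt (x := x)) (Pi.single s 1)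
  rw [key] at h1
  exact h1.unique (hasDerivAt_const 0 _)

lemma var_formula (a : ℝ) (x : Fin L → ℝ) (t : Fin L) (ht : 0 < (t : ℕ)) :
    ((∑ r ∈ Finset.Iio t, Real.exp (a * x t * x r) * (a * x r) * x r)
        * (∑ r ∈ Finset.Iio t, Real.exp (a * x t * x r))
      - (∑ r ∈ Finset.Iio t, Real.exp (a * x t * x r) * x r)
        * (∑ r ∈ Finset.Iio t, Real.exp (a * x t * x r) * (a * x r)))
      / (∑ r ∈ Finset.Iio t, Real.exp (a * x t * x r)) ^ 2
    = a * attnVar L a x t := by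
  have hZpos := Zf_pos a t ht x
  have hZne : Zf a t x ≠ 0 := hZpos.ne'
  have hZrfl : (∑ r ∈ Finset.Iio t, Real.exp (a * x t * x r)) = Zf a t x := rfl
  have hNrfl : (∑ r ∈ Finset.Iio t, Real.exp (a * x t * x r) * x r) = Nf a t x := rfl
  have hS2 : (∑ r ∈ Finset.Iio t, Real.exp (a * x t * x r) * (a * x r) * x r)
      = a * ∑ r ∈ Finset.Iio t, Real.exp (a * x t * x r) * x r ^ 2 := by
    rw [Finset.mul_sum]; exact Finset.sum_congr rfl fun r _ => by ring
  have hZ' : (∑ r ∈ Finset.Iio t, Real.exp (a * x t * x r) * (a * x r))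
      = a * Nf a t x := by
    unfold Nf; rw [Finset.mul_sum]; exact Finset.sum_congr rfl fun r _ => by ring
  have hvar : attnVar L a x t
      = ((∑ r ∈ Finset.Iio t, Real.exp (a * x t * x r) * x r ^ 2) * Zf a t x
          - Nf a t x ^ 2) / Zf a t x ^ 2 := by
    unfold attnVar
    simp only [mu_eq a t x, hZrfl]
    have hterm : ∀ s ∈ Finset.Iio t,
        Real.exp (a * x t * x s) / Zf a t x * (x s - Nf a t x / Zf a t x) ^ 2
        = ((Real.exp (a * x t * x s) * x s ^ 2) * Zf a t x ^ 2
            - (Real.exp (a * x t * x s) * x s) * (2 * Nf a t x * Zf a t x)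
            + Real.exp (a * x t * x s) * Nf a t x ^ 2) / Zf a t x ^ 3 := by
      intro s _; field_simp; ring
    rw [Finset.sum_congr rfl hterm, ← Finset.sum_div, Finset.sum_add_distrib,
      Finset.sum_sub_distrib, ← Finset.sum_mul, ← Finset.sum_mul, ← Finset.sum_mul,
      hNrfl, hZrfl]
    rw [div_eq_div_iff (by positivity) (by positivity)]
    ring
  rw [hS2, hZ', hZrfl, hNrfl, hvar]
  field_simp

lemma entry_diag (a : ℝ) (x : Fin L → ℝ) (t : Fin L) :
    fderiv ℝ (fun y => residMap L a y t) x (Pi.single t 1)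
      = 1 - a * attnVar L a x t := by
  have h1 := dirDeriv ((diff_comp a t).differentiableAt (x := x)) (Pi.single t 1)
  have hct : ∀ h : ℝ, (x + h • (Pi.single t 1 : Fin L → ℝ)) t = x t + h := by
    intro h; simp
  have h0 : HasDerivAt (fun h : ℝ => x t + h) 1 0 := by
    simpa using (hasDerivAt_id (0 : ℝ)).const_add (x t)
  rcases Nat.eq_zero_or_pos (t : ℕ) with ht | ht
  · have key : (fun h : ℝ => residMap L a (x + h • (Pi.single t 1 : Fin L → ℝ)) t)
        = fun h => x t + h := by
      funext h
      show (x + h • (Pi.single t 1 : Fin L → ℝ)) t - attnMu L a (x + h • (Pi.single t 1 : Fin L → ℝ)) t = x t + h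
      rw [hct h]
      simp [attnMu, Iio_empty t ht]
    rw [key] at h1
    rw [h1.unique h0]
    simp [attnVar, Iio_empty t ht]
  · have key : (fun h : ℝ => residMap L a (x + h • (Pi.single t 1 : Fin L → ℝ)) t)
        = fun h => (x t + h)
            - (∑ r ∈ Finset.Iio t, Real.exp (a * (x t + h) * x r) * x r)
              / (∑ r ∈ Finset.Iio t, Real.exp (a * (x t + h) * x r)) := by
      funext h
      set u := x + h • (Pi.single t 1 : Fin L → ℝ) with hu
      have hut : u t = x t + h := by rw [hu]; exact hct h
      have hr' : ∀ r ∈ Finset.Iio t, u r = x r := by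
        intro r hr
        rw [hu]; simp [Pi.single_eq_of_ne (ne_of_lt (Finset.mem_Iio.mp hr))]
      have hNf : Nf a t u = ∑ r ∈ Finset.Iio t, Real.exp (a * (x t + h) * x r) * x r :=
        Finset.sum_congr rfl fun r hr => by rw [hut, hr' r hr]
      have hZf : Zf a t u = ∑ r ∈ Finset.Iio t, Real.exp (a * (x t + h) * x r) :=
        Finset.sum_congr rfl fun r hr => by rw [hut, hr' r hr]
      show u t - attnMu L a u t = _
      rw [mu_eq, hNf, hZf, hut]
    rw [key] at h1
    have hbase : ∀ r : Fin L, HasDerivAt (fun h : ℝ => a * (x t + h) * x r) (a * x r) 0 := by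
      intro r
      simpa using (h0.const_mul a).mul_const (x r)
    have hZ : HasDerivAt (fun h : ℝ => ∑ r ∈ Finset.Iio t, Real.exp (a * (x t + h) * x r))
        (∑ r ∈ Finset.Iio t, Real.exp (a * x t * x r) * (a * x r)) 0 := by
      apply HasDerivAt.fun_sum
      intro r _
      simpa using (hbase r).exp
    have hN : HasDerivAt
        (fun h : ℝ => ∑ r ∈ Finset.Iio t, Real.exp (a * (x t + h) * x r) * x r)
        (∑ r ∈ Finset.Iio t, Real.exp (a * x t * x r) * (a * x r) * x r) 0 := by
      apply HasDerivAt.fun_sum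
      intro r _
      simpa using ((hbase r).exp.mul_const (x r))
    have hZne : (∑ r ∈ Finset.Iio t, Real.exp (a * (x t + (0:ℝ)) * x r)) ≠ 0 := by
      simp only [add_zero]
      exact (Zf_pos a t ht x).ne'
    have hdiv := hN.div hZ hZne
    have hfull := h0.sub hdiv
    rw [h1.unique hfull]
    simp only [add_zero]
    congr 1
    exact var_formula a x t ht

end Stmt4Aux

/-- The scalar residual map `E` is differentiable on `ℝ^L`; its Jacobian matrix at `x`
(entries `∂e_t/∂x_s = fderiv ℝ E x (Pi.single s 1) t`) vanishes for `s > t`, the first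
diagonal entry is `1`, and its determinant equals `∏_{t=2}^L (1 − a·Var_t(x))`
(0-indexed: product over `t` with `1 ≤ (t : ℕ)`). -/
theorem stmt4 (L : ℕ) (hL : 1 ≤ L) (a : ℝ) :
    Differentiable ℝ (residMap L a) ∧
    ∀ x : Fin L → ℝ,
      (∀ t s : Fin L, t < s → fderiv ℝ (residMap L a) x (Pi.single s 1) t = 0) ∧
      (∀ t : Fin L, (t : ℕ) = 0 → fderiv ℝ (residMap L a) x (Pi.single t 1) t = 1) ∧
      (Matrix.of fun t s : Fin L => fderiv ℝ (residMap L a) x (Pi.single s 1) t).det =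
        ∏ t ∈ Finset.univ.filter (fun t : Fin L => 1 ≤ (t : ℕ)),
          (1 - a * attnVar L a x t) := by

  refine ⟨Stmt4Aux.diff_resid a, fun x => ⟨?_, ?_, ?_⟩⟩
  · intro t s hts
    rw [Stmt4Aux.entry a x t s]
    exact Stmt4Aux.entry_zero a x t s hts
  · intro t ht
    rw [Stmt4Aux.entry a x t t, Stmt4Aux.entry_diag a x t]
    simp [attnVar, Stmt4Aux.Iio_empty t ht]
  · have hlow : (Matrix.of fun t s : Fin L =>
        fderiv ℝ (residMap L a) x (Pi.single s 1) t).BlockTriangular OrderDual.toDual := by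
      intro i j hij
      have hij' : i < j := hij
      rw [Matrix.of_apply, Stmt4Aux.entry a x i j]
      exact Stmt4Aux.entry_zero a x i j hij'
    rw [Matrix.det_of_lowerTriangular _ hlow]
    have hdiag : ∀ t : Fin L, (Matrix.of fun t s : Fin L =>
        fderiv ℝ (residMap L a) x (Pi.single s 1) t) t t = 1 - a * attnVar L a x t := by
      intro t
      rw [Matrix.of_apply, Stmt4Aux.entry a x t t, Stmt4Aux.entry_diag a x t]
    rw [Finset.prod_congr rfl fun t _ => hdiag t]
    rw [← Finset.prod_filter_mul_prod_filter_not Finset.univ (fun t : Fin L => 1 ≤ (t : ℕ))]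
    have h1 : ∏ t ∈ Finset.univ.filter (fun t : Fin L => ¬ 1 ≤ (t : ℕ)),
        (1 - a * attnVar L a x t) = 1 := by
      apply Finset.prod_eq_one
      intro t htm
      have ht0 : (t : ℕ) = 0 := by
        have := (Finset.mem_filter.mp htm).2
        omega
      simp [attnVar, Stmt4Aux.Iio_empty t ht0]
    rw [h1, mul_one]


end
end
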